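/- Let X be a K-subgaussian real random variable (with K ≥ 1), Z an independent standard Gaussian, and Y_t = √(1-t²)X + tZ for 0 < t ≤ 1. Then the density ρ of Y_t satisfies ρ(x) ≤ (3/(√(2π) t)) e^{-x²/(8K²)} for all x. -/

import Mathlib

open MeasureTheory ProbabilityTheory Real

/-- A real random variable `X` is `K`-subgaussian if `P(|X| ≥ s) ≤ 2 e^{-s²/K²}` for all `s > 0`. -/
def IsSubgaussianRV {Ω : Type*} [MeasureSpace Ω] (X : Ω → ℝ) (K : ℝ) : Prop :=
  ∀ s : ℝ, 0 < s → (ℙ {ω | s ≤ |X ω|}) ≤ ENNReal.ofReal (2 * Real.exp (-s ^ 2 / K ^ 2))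

set_option maxHeartbeats 1000000 in
/-- Density upper bound after Gaussian smoothing: if `X` is `K`-subgaussian (`K ≥ 1`), `Z`
is an independent standard Gaussian and `Y_t = √(1-t²)X + tZ` with `0 < t ≤ 1`, then `Y_t`
has a density `ρ` with `ρ(x) ≤ (3/(√(2π)t)) e^{-x²/(8K²)}` for all `x`. -/
theorem density_upper_bound
    {Ω : Type*} [MeasureSpace Ω] [IsProbabilityMeasure (ℙ : Measure Ω)]
    (X Z : Ω → ℝ) (K t : ℝ) (hK : 1 ≤ K) (ht : 0 < t) (ht1 : t ≤ 1)
    (hXmeas : Measurable X)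
    (hXsub : IsSubgaussianRV X K)
    (hZ : Measure.map Z ℙ = gaussianReal 0 1)
    (hindep : IndepFun X Z ℙ) :
    ∃ ρ : ℝ → ℝ,
      Measure.map (fun ω => Real.sqrt (1 - t ^ 2) * X ω + t * Z ω) ℙ
        = volume.withDensity (fun x => ENNReal.ofReal (ρ x))
      ∧ ∀ x : ℝ,
          ρ x ≤ (3 / (Real.sqrt (2 * Real.pi) * t)) * Real.exp (-x ^ 2 / (8 * K ^ 2)) := by
  set c := Real.sqrt (1 - t ^ 2) with hc
  have hc0 : 0 ≤ c := Real.sqrt_nonneg _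
  have hc1 : c ≤ 1 := by
    exact Real.sqrt_le_one.2 (by nlinarith)
  set v : NNReal := ⟨t ^ 2, sq_nonneg t⟩ with hv
  have hv0 : v ≠ 0 := by
    intro h
    have := congrArg (NNReal.toReal) h
    simp [hv] at this
    exact ht.ne' (pow_eq_zero_iff two_ne_zero |>.mp (show t ^ 2 = 0 from this))
  set B : ℝ := (Real.sqrt (2 * Real.pi) * t)⁻¹ with hB
  have hB0 : 0 < B := by
    rw [hB]
    positivity
  -- pdf formula
  have hpdf : ∀ m x : ℝ, gaussianPDFReal m v x
      = B * Real.exp (-(x - m) ^ 2 / (2 * t ^ 2)) := by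
    intro m x
    unfold gaussianPDFReal
    change (Real.sqrt (2 * Real.pi * t ^ 2))⁻¹ * Real.exp (-(x - m) ^ 2 / (2 * t ^ 2)) = _
    rw [show 2 * Real.pi * t ^ 2 = (2 * Real.pi) * t ^ 2 by ring,
      Real.sqrt_mul (by positivity), Real.sqrt_sq ht.le, hB]
  have hpdf_le : ∀ m x : ℝ, gaussianPDFReal m v x ≤ B := by
    intro m x
    rw [hpdf]
    have h := Real.exp_le_one_iff.2 (show -(x - m) ^ 2 / (2 * t ^ 2) ≤ 0 from
      div_nonpos_of_nonpos_of_nonneg (neg_nonpos.2 (sq_nonneg _)) (by positivity))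
    nlinarith [h, hB0]
  -- measures
  have hZae : AEMeasurable Z ℙ := by
    refine aemeasurable_of_map_neZero ?_
    rw [hZ]; infer_instance
  set μ : Measure ℝ := Measure.map X ℙ with hμ
  have : IsProbabilityMeasure μ := Measure.isProbabilityMeasure_map hXmeas.aemeasurable
  have hpair : Measure.map (fun ω => (X ω, Z ω)) ℙ = μ.prod (gaussianReal 0 1) := by
    rw [← hZ, ← (indepFun_iff_map_prod_eq_prod_map_map hXmeas.aemeasurable hZae).mp hindep]
  set f : ℝ × ℝ → ℝ := fun p => c * p.1 + t * p.2 with hf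
  have hfm : Measurable f := by fun_prop
  have hYmap : Measure.map (fun ω => c * X ω + t * Z ω) ℙ
      = (μ.prod (gaussianReal 0 1)).map f := by
    rw [← hpair,
      AEMeasurable.map_map_of_aemeasurable hfm.aemeasurable (hXmeas.aemeasurable.prodMk hZae)]
    rfl
  -- per-a law
  have hmapa : ∀ a : ℝ, (gaussianReal 0 1).map (fun b => c * a + t * b)
      = gaussianReal (c * a) v := by
    intro a
    have h1 : (gaussianReal 0 1).map (fun b => t * b) = gaussianReal 0 v := by
      have h0 := gaussianReal_map_const_mul (μ := 0) (v := 1) t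
      rw [mul_zero, mul_one] at h0
      exact h0
    have h2 : (fun b => c * a + t * b) = (fun y => c * a + y) ∘ (fun b => t * b) := rfl
    rw [h2, ← Measure.map_map (by fun_prop) (by fun_prop), h1]
    simpa using gaussianReal_map_const_add (μ := 0) (v := v) (c * a)
  -- density
  set ρ' : ℝ → ENNReal := fun x => ∫⁻ a, gaussianPDF (c * a) v x ∂μ with hρ'
  have hgm : Measurable (fun p : ℝ × ℝ => gaussianPDF (c * p.1) v p.2) := by
    unfold gaussianPDF gaussianPDFReal
    fun_prop
  have hρ'le : ∀ x, ρ' x ≤ ENNReal.ofReal B := by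
    intro x
    calc ρ' x ≤ ∫⁻ _, ENNReal.ofReal B ∂μ :=
          lintegral_mono fun a => ENNReal.ofReal_le_ofReal (hpdf_le _ _)
      _ = ENNReal.ofReal B := by simp
  have hρ'ne : ∀ x, ρ' x ≠ ⊤ := fun x => ((hρ'le x).trans_lt ENNReal.ofReal_lt_top).ne
  have hmain : (μ.prod (gaussianReal 0 1)).map f = volume.withDensity ρ' := by
    ext s hs
    rw [Measure.map_apply hfm hs, Measure.prod_apply (hfm hs), withDensity_apply _ hs]
    have key : ∀ a : ℝ, (gaussianReal 0 1) (Prod.mk a ⁻¹' (f ⁻¹' s))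
        = ∫⁻ x in s, gaussianPDF (c * a) v x := by
      intro a
      have : Prod.mk a ⁻¹' (f ⁻¹' s) = (fun b => c * a + t * b) ⁻¹' s := rfl
      rw [this, ← Measure.map_apply (by fun_prop) hs, hmapa a, gaussianReal_apply _ hv0]
    simp_rw [key]
    rw [lintegral_lintegral_swap]
    exact hgm.aemeasurable
  refine ⟨fun x => (ρ' x).toReal, ?_, ?_⟩
  · rw [hYmap, hmain]
    congr 1
    ext x
    rw [ENNReal.ofReal_toReal (hρ'ne x)]
  · intro x
    set M : ℝ := 3 / (Real.sqrt (2 * Real.pi) * t) * Real.exp (-x ^ 2 / (8 * K ^ 2)) with hM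
    have hBM : (3 : ℝ) * B * Real.exp (-x ^ 2 / (8 * K ^ 2)) = M := by
      rw [hM, hB]; ring
    refine ENNReal.toReal_le_of_le_ofReal (by rw [hM]; positivity) ?_
    rcases eq_or_ne x 0 with rfl | hx
    · refine (hρ'le 0).trans (ENNReal.ofReal_le_ofReal ?_)
      rw [← hBM]
      simp only [ne_eq, OfNat.ofNat_ne_zero, not_false_eq_true, zero_pow, neg_zero, zero_div,
        Real.exp_zero, mul_one]
      nlinarith
    · have hx2 : 0 < |x| / 2 := by positivity
      set A : Set ℝ := {a : ℝ | |x| / 2 ≤ |a|} with hA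
      have hAm : MeasurableSet A := measurableSet_le measurable_const (by fun_prop)
      have hμA : μ A ≤ ENNReal.ofReal (2 * Real.exp (-x ^ 2 / (8 * K ^ 2))) := by
        have h1 : μ A = ℙ {ω | |x| / 2 ≤ |X ω|} := Measure.map_apply hXmeas hAm
        rw [h1]
        refine (hXsub _ hx2).trans (ENNReal.ofReal_le_ofReal ?_)
        have hKpos : (0:ℝ) < K := lt_of_lt_of_le one_pos hK
        have hxx : (|x| / 2) ^ 2 = x ^ 2 / 4 := by
          rw [div_pow, sq_abs]; norm_num
        have hsle : -(|x| / 2) ^ 2 / K ^ 2 ≤ -x ^ 2 / (8 * K ^ 2) := by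
          rw [div_le_div_iff₀ (by positivity) (by positivity), hxx]
          nlinarith [mul_nonneg (sq_nonneg x) (sq_nonneg K)]
        have h3 := Real.exp_le_exp.2 hsle
        linarith
      have hbound2 : ∀ a ∈ Aᶜ, gaussianPDF (c * a) v x
          ≤ ENNReal.ofReal (B * Real.exp (-x ^ 2 / (8 * K ^ 2))) := by
        intro a ha
        have ha' : |a| < |x| / 2 := by
          simpa [hA] using ha
        refine ENNReal.ofReal_le_ofReal ?_
        rw [hpdf]
        have habs : |x| / 2 ≤ |x - c * a| := by
          have h1 : |c * a| ≤ |a| := by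
            rw [abs_mul, abs_of_nonneg hc0]
            nlinarith [abs_nonneg a]
          have := abs_sub_abs_le_abs_sub x (c * a)
          linarith
        have hsq : x ^ 2 / 4 ≤ (x - c * a) ^ 2 := by
          have h2 : (|x| / 2) ^ 2 ≤ |x - c * a| ^ 2 := pow_le_pow_left₀ (by positivity) habs 2
          rw [div_pow, sq_abs, sq_abs] at h2
          norm_num at h2
          linarith
        have hKpos : (0:ℝ) < K := lt_of_lt_of_le one_pos hK
        have ht2 : t ^ 2 ≤ 1 := by nlinarith
        have hK2 : (1:ℝ) ≤ K ^ 2 := by nlinarith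
        have hexp : -(x - c * a) ^ 2 / (2 * t ^ 2) ≤ -x ^ 2 / (8 * K ^ 2) := by
          rw [div_le_div_iff₀ (by positivity) (by positivity)]
          nlinarith [hsq, sq_nonneg x, sq_nonneg (x - c * a), ht2, hK2]
        exact mul_le_mul_of_nonneg_left (Real.exp_le_exp.2 hexp) hB0.le
      have hsplit : ρ' x = (∫⁻ a in A, gaussianPDF (c * a) v x ∂μ)
          + ∫⁻ a in Aᶜ, gaussianPDF (c * a) v x ∂μ := (lintegral_add_compl _ hAm).symm
      have h1 : (∫⁻ a in A, gaussianPDF (c * a) v x ∂μ) ≤ ENNReal.ofReal B * μ A := by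
        calc (∫⁻ a in A, gaussianPDF (c * a) v x ∂μ)
            ≤ ∫⁻ _ in A, ENNReal.ofReal B ∂μ :=
              lintegral_mono fun a => ENNReal.ofReal_le_ofReal (hpdf_le _ _)
          _ = ENNReal.ofReal B * μ A := by rw [setLIntegral_const]
      have h2 : (∫⁻ a in Aᶜ, gaussianPDF (c * a) v x ∂μ)
          ≤ ENNReal.ofReal (B * Real.exp (-x ^ 2 / (8 * K ^ 2))) := by
        calc (∫⁻ a in Aᶜ, gaussianPDF (c * a) v x ∂μ)
            ≤ ∫⁻ _ in Aᶜ, ENNReal.ofReal (B * Real.exp (-x ^ 2 / (8 * K ^ 2))) ∂μ :=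
              setLIntegral_mono (by fun_prop) hbound2
          _ = ENNReal.ofReal (B * Real.exp (-x ^ 2 / (8 * K ^ 2))) * μ Aᶜ := by
              rw [setLIntegral_const]
          _ ≤ _ := by
              have : μ Aᶜ ≤ 1 := prob_le_one
              calc _ ≤ ENNReal.ofReal (B * Real.exp (-x ^ 2 / (8 * K ^ 2))) * 1 :=
                    mul_le_mul_right this _
                _ = _ := mul_one _
      calc ρ' x ≤ ENNReal.ofReal B * μ A
            + ENNReal.ofReal (B * Real.exp (-x ^ 2 / (8 * K ^ 2))) := by
              rw [hsplit]; exact add_le_add h1 h2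
        _ ≤ ENNReal.ofReal B * ENNReal.ofReal (2 * Real.exp (-x ^ 2 / (8 * K ^ 2)))
            + ENNReal.ofReal (B * Real.exp (-x ^ 2 / (8 * K ^ 2))) := by
              exact add_le_add (mul_le_mul_right hμA _) le_rfl
        _ = ENNReal.ofReal M := by
              rw [← ENNReal.ofReal_mul hB0.le, ← ENNReal.ofReal_add (by positivity) (by positivity),
                ← hBM]
              congr 1
              ring
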